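/- arXiv:1505.06465 — 2 statements merged into one kernel-verified Lean document; each statement's English description precedes it below -/
import Mathlib

section
/- If λ : (0,∞) → ℝ is differentiable, satisfies λ'(t) + λ(t)² - k² ≤ 0 for all t > 0 (with k > 0), and λ(t) ≤ 1/t + C near t = 0 (i.e., limsup_{t→0+} t·λ(t) ≤ 1), then λ(t) ≤ k·coth(k t) for all t > 0. -/
open Filter Topology

/-- Gronwall-type comparison: if `λ' + λ² - k² ≤ 0` on `(0,∞)` and
`limsup_{t→0+} t·λ(t) ≤ 1`, then `λ(t) ≤ k·coth(kt)` for all `t > 0`. -/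
theorem gronwall_coth (k : ℝ) (hk : 0 < k) (lam : ℝ → ℝ)
    (hdiff : ∀ t ∈ Set.Ioi (0 : ℝ), DifferentiableAt ℝ lam t)
    (hineq : ∀ t ∈ Set.Ioi (0 : ℝ), deriv lam t + (lam t) ^ 2 - k ^ 2 ≤ 0)
    (hlim : Filter.limsup (fun t => t * lam t) (𝓝[>] (0 : ℝ)) ≤ 1) :
    ∀ t ∈ Set.Ioi (0 : ℝ), lam t ≤ k * Real.cosh (k * t) / Real.sinh (k * t) := by
  intro t₀ ht₀
  rw [Set.mem_Ioi] at ht₀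
  by_contra hcon
  push_neg at hcon
  have hs₀ : 0 < Real.sinh (k * t₀) := Real.sinh_pos_iff.mpr (by positivity)
  have hf0 : 0 < lam t₀ * Real.sinh (k * (t₀ - 0)) - k * Real.cosh (k * (t₀ - 0)) := by
    have h1 := (div_lt_iff₀ hs₀).mp hcon
    simp only [sub_zero]
    nlinarith
  obtain ⟨a, hfa, ha0, hat₀⟩ : ∃ a, (0 < lam t₀ * Real.sinh (k * (t₀ - a)) -
      k * Real.cosh (k * (t₀ - a))) ∧ 0 < a ∧ a < t₀ := by
    have hcont : ContinuousAt (fun a => lam t₀ * Real.sinh (k * (t₀ - a)) -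
        k * Real.cosh (k * (t₀ - a))) 0 := by fun_prop
    have h1 : ∀ᶠ a in 𝓝[>] (0:ℝ), 0 < lam t₀ * Real.sinh (k * (t₀ - a)) -
        k * Real.cosh (k * (t₀ - a)) :=
      (hcont.eventually (lt_mem_nhds hf0)).filter_mono nhdsWithin_le_nhds
    have h2 : ∀ᶠ a in 𝓝[>] (0:ℝ), a ∈ Set.Ioo 0 t₀ :=
      Ioo_mem_nhdsGT ht₀
    obtain ⟨a, h1, h2⟩ := (h1.and h2).exists
    exact ⟨a, h1, h2.1, h2.2⟩
  set s : ℝ → ℝ := fun t => Real.sinh (k * (t - a)) with hs_def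
  set c : ℝ → ℝ := fun t => Real.cosh (k * (t - a)) with hc_def
  set h : ℝ → ℝ := fun t => lam t * (s t) ^ 2 - k * (s t * c t) with hh_def
  have hks : ∀ t : ℝ, HasDerivAt (fun t => k * (t - a)) k t := fun t => by
    simpa using ((hasDerivAt_id t).sub_const a).const_mul k
  have hs' : ∀ t : ℝ, HasDerivAt s (Real.cosh (k * (t - a)) * k) t := fun t => by
    have := (Real.hasDerivAt_sinh (k * (t - a))).comp t (hks t); exact this
  have hc' : ∀ t : ℝ, HasDerivAt c (Real.sinh (k * (t - a)) * k) t := fun t => by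
    have := (Real.hasDerivAt_cosh (k * (t - a))).comp t (hks t); exact this
  have hh' : ∀ t ∈ Set.Ioi a, HasDerivAt h
      (deriv lam t * (s t) ^ 2 + lam t * ((2 : ℕ) * (s t) ^ 1 * (Real.cosh (k * (t - a)) * k))
        - k * (Real.cosh (k * (t - a)) * k * c t + s t * (Real.sinh (k * (t - a)) * k))) t := by
    intro t ht
    rw [Set.mem_Ioi] at ht
    have ht0 : t ∈ Set.Ioi (0:ℝ) := Set.mem_Ioi.mpr (ha0.trans ht)
    exact (((hdiff t ht0).hasDerivAt.mul ((hs' t).pow 2)).sub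
      (((hs' t).mul (hc' t)).const_mul k))
  have hderiv_le : ∀ t ∈ Set.Ioi a, deriv h t ≤ 0 := by
    intro t ht
    rw [(hh' t ht).deriv]
    rw [Set.mem_Ioi] at ht
    have ht0 : t ∈ Set.Ioi (0:ℝ) := Set.mem_Ioi.mpr (ha0.trans ht)
    have hi := hineq t ht0
    have hsq : Real.cosh (k * (t - a)) ^ 2 - Real.sinh (k * (t - a)) ^ 2 = 1 :=
      Real.cosh_sq_sub_sinh_sq _
    have h1 : s t = Real.sinh (k * (t - a)) := rfl
    have h2 : c t = Real.cosh (k * (t - a)) := rfl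
    rw [h1, h2]
    push_cast
    rw [pow_one]
    nlinarith [sq_nonneg (lam t * Real.sinh (k * (t - a)) - k * Real.cosh (k * (t - a))),
      mul_nonneg (neg_nonneg.mpr hi) (sq_nonneg (Real.sinh (k * (t - a)))), sq_nonneg (Real.sinh (k*(t-a)))]
  have hanti : AntitoneOn h (Set.Ioc a t₀) := by
    apply antitoneOn_of_deriv_nonpos (convex_Ioc a t₀)
    · intro t ht
      exact ((hh' t (Set.mem_Ioi.mpr ht.1)).differentiableAt).continuousAt.continuousWithinAt
    · rw [interior_Ioc]
      intro t ht
      exact ((hh' t (Set.mem_Ioi.mpr ht.1)).differentiableAt).differentiableWithinAt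
    · rw [interior_Ioc]
      intro t ht
      exact hderiv_le t (Set.mem_Ioi.mpr ht.1)
  have hspos : 0 < s t₀ := Real.sinh_pos_iff.mpr (by nlinarith)
  have hε : 0 < h t₀ := by
    have := mul_pos hspos hfa
    simp only [hh_def, hs_def, hc_def] at *
    nlinarith
  -- contradiction via continuity of lam at a
  set M : ℝ := |lam a| + 1 with hM_def
  have hMpos : 0 < M := by positivity
  have E1 : ∀ᶠ t in 𝓝[>] a, lam t < M := by
    have hca : ContinuousAt lam a := (hdiff a (Set.mem_Ioi.mpr ha0)).continuousAt
    have : lam a < M := by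
      have := le_abs_self (lam a); simp only [hM_def]; linarith
    exact (hca.eventually (gt_mem_nhds this)).filter_mono nhdsWithin_le_nhds
  have E2 : ∀ᶠ t in 𝓝[>] a, (s t) ^ 2 < h t₀ / M := by
    have hca : ContinuousAt (fun t => (s t) ^ 2) a := by fun_prop
    have hval : (s a) ^ 2 < h t₀ / M := by
      have : s a = 0 := by simp [hs_def]
      rw [this]
      simpa using div_pos hε hMpos
    exact (hca.eventually (gt_mem_nhds hval)).filter_mono nhdsWithin_le_nhds
  have E3 : ∀ᶠ t in 𝓝[>] a, t ∈ Set.Ioc a t₀ :=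
    Ioc_mem_nhdsGT hat₀
  obtain ⟨t, h1, h2, h3⟩ := (E1.and (E2.and E3)).exists
  have hht : h t₀ ≤ h t := hanti h3 (Set.mem_Ioc.mpr ⟨hat₀, le_refl _⟩) h3.2
  have hsnn : 0 ≤ s t := Real.sinh_nonneg_iff.mpr (by nlinarith [h3.1])
  have hcnn : 0 ≤ c t := (Real.cosh_pos _).le
  have key : h t₀ ≤ lam t * (s t) ^ 2 := by
    have h0 : 0 ≤ k * (s t * c t) := by positivity
    have hte : h t = lam t * (s t) ^ 2 - k * (s t * c t) := rfl
    linarith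
  have : lam t * (s t) ^ 2 < M * (h t₀ / M) := by
    calc lam t * (s t) ^ 2 ≤ M * (s t) ^ 2 := by nlinarith [sq_nonneg (s t)]
    _ < M * (h t₀ / M) := by apply mul_lt_mul_of_pos_left h2 hMpos
  rw [mul_div_cancel₀ _ hMpos.ne'] at this
  linarith
end

section
/- Let A, B be real symmetric n×n matrices and K a real skew-symmetric n×n matrix satisfying the differential equation A'(t) + A(t)² + A(t)K − K A(t) + K² − B = 0, where K and B are constant in t. Let λ(t) denote the largest eigenvalue of A(t). If B − K² ≤ k² I (in the sense of symmetric matrices) for some k > 0, then at any point where λ is differentiable, λ'(t) + λ(t)² ≤ k². -/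
open Matrix

private lemma riccati_aux {d C : ℝ} (h : ∀ s : ℝ, 0 < s → d ≤ s * C) : d ≤ 0 := by
  rcases le_or_gt C 0 with hC | hC
  · have := h 1 one_pos; nlinarith
  · by_contra hd
    push_neg at hd
    have h2 := h (d / (2 * C)) (div_pos hd (by linarith))
    have h3 : d / (2 * C) * C = d / 2 := by field_simp
    rw [h3] at h2
    linarith

private lemma riccati_symm_dot {n : ℕ} {M : Matrix (Fin n) (Fin n) ℝ} (hM : Mᵀ = M)
    (x y : Fin n → ℝ) : M *ᵥ x ⬝ᵥ y = M *ᵥ y ⬝ᵥ x := by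
  rw [dotProduct_comm, dotProduct_mulVec, ← mulVec_transpose, hM]

/-- Matrix Riccati comparison: if symmetric `A(t)` solves
`A' + A² + AK − KA + K² − B = 0` with `K` skew-symmetric and `B` symmetric
constant, and `B − K² ≤ k² I`, then the largest eigenvalue
`λ(t) = sup_{|v|=1} ⟨A(t)v, v⟩` satisfies `λ' + λ² ≤ k²` where differentiable. -/
theorem matrix_riccati_eigenvalue (n : ℕ) (A : ℝ → Matrix (Fin n) (Fin n) ℝ)
    (K B : Matrix (Fin n) (Fin n) ℝ) (k : ℝ) (hk : 0 < k)
    (hAsymm : ∀ t, (A t)ᵀ = A t) (hKskew : Kᵀ = -K) (hBsymm : Bᵀ = B)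
    (hderiv : ∀ t i j, HasDerivAt (fun s => A s i j)
      (-(A t * A t + A t * K - K * A t + K * K - B) i j) t)
    (hB : ∀ v : Fin n → ℝ, (B - K * K).mulVec v ⬝ᵥ v ≤ k ^ 2 * (v ⬝ᵥ v))
    (lam : ℝ → ℝ)
    (hlam : ∀ t, lam t = sSup {r : ℝ | ∃ v : Fin n → ℝ,
      (∑ i, (v i) ^ 2) = 1 ∧ r = (A t).mulVec v ⬝ᵥ v}) :
    ∀ t, DifferentiableAt ℝ lam t → deriv lam t + (lam t) ^ 2 ≤ k ^ 2 := by
  intro t hdiff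
  by_cases hn : n = 0
  · subst hn
    have hl : ∀ s, lam s = 0 := by
      intro s
      have hs : {r : ℝ | ∃ v : Fin 0 → ℝ,
          (∑ i, (v i) ^ 2) = 1 ∧ r = (A s).mulVec v ⬝ᵥ v} = ∅ := by
        ext r; simp
      rw [hlam s, hs, Real.sSup_empty]
    rw [show lam = fun _ => (0:ℝ) from funext hl]
    simp
    positivity
  -- bridging dot product and sum of squares
  have hdot : ∀ v : Fin n → ℝ, v ⬝ᵥ v = ∑ i, v i ^ 2 := by
    intro v; simp [dotProduct, sq]
  set S : Set (Fin n → ℝ) := {v | ∑ i, v i ^ 2 = 1} with hSdef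
  have hcont : ∀ M : Matrix (Fin n) (Fin n) ℝ,
      Continuous fun v : Fin n → ℝ => M *ᵥ v ⬝ᵥ v := by
    intro M
    have h1 : (fun v : Fin n → ℝ => M *ᵥ v ⬝ᵥ v)
        = fun v => ∑ i, (∑ j, M i j * v j) * v i := by
      funext v; simp [Matrix.mulVec, dotProduct]
    rw [h1]
    exact continuous_finset_sum _ fun i _ =>
      (continuous_finset_sum _ fun j _ =>
        continuous_const.mul (continuous_apply j)).mul (continuous_apply i)
  have hScl : IsClosed S :=
    isClosed_eq (continuous_finset_sum _ fun i _ => (continuous_apply i).pow 2)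
      continuous_const
  have hsub : S ⊆ Set.pi Set.univ fun _ => Set.Icc (-1:ℝ) 1 := by
    intro v hv i _
    have hv' : ∑ i, v i ^ 2 = 1 := hv
    have h1 : v i ^ 2 ≤ 1 := by
      calc v i ^ 2 ≤ ∑ j, v j ^ 2 :=
            Finset.single_le_sum (fun j _ => sq_nonneg (v j)) (Finset.mem_univ i)
        _ = 1 := hv'
    constructor <;> nlinarith
  have hScp : IsCompact S :=
    (isCompact_univ_pi fun _ => isCompact_Icc).of_isClosed_subset hScl hsub
  have hSne : S.Nonempty := by
    refine ⟨fun i => if i = ⟨0, Nat.pos_of_ne_zero hn⟩ then (1:ℝ) else 0, ?_⟩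
    show (∑ i, (if i = (⟨0, Nat.pos_of_ne_zero hn⟩ : Fin n) then (1:ℝ) else 0) ^ 2) = 1
    simp [sq, ite_mul, mul_ite]
  have hset : ∀ s, {r : ℝ | ∃ v : Fin n → ℝ,
      (∑ i, (v i) ^ 2) = 1 ∧ r = (A s).mulVec v ⬝ᵥ v}
      = (fun v => (A s) *ᵥ v ⬝ᵥ v) '' S := by
    intro s; ext r
    constructor
    · rintro ⟨v, hv1, rfl⟩; exact ⟨v, hv1, rfl⟩
    · rintro ⟨v, hv1, rfl⟩; exact ⟨v, hv1, rfl⟩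
  have hbdd : ∀ s, BddAbove ((fun v => (A s) *ᵥ v ⬝ᵥ v) '' S) :=
    fun s => (hScp.image (hcont (A s))).bddAbove
  have hfle : ∀ s, ∀ u ∈ S, (A s) *ᵥ u ⬝ᵥ u ≤ lam s := by
    intro s u hu
    rw [hlam s, hset s]
    exact le_csSup (hbdd s) (Set.mem_image_of_mem _ hu)
  -- the quadratic form is bounded by `lam s` times the squared norm
  have hle : ∀ s, ∀ x : Fin n → ℝ, (A s) *ᵥ x ⬝ᵥ x ≤ lam s * (x ⬝ᵥ x) := by
    intro s x
    rcases eq_or_ne (x ⬝ᵥ x) 0 with hx | hx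
    · have hx0 : x = 0 := by
        funext i
        have h2 : ∑ i, x i ^ 2 = 0 := by rw [← hdot]; exact hx
        have h3 := (Finset.sum_eq_zero_iff_of_nonneg
          (fun j _ => sq_nonneg (x j))).mp h2 i (Finset.mem_univ i)
        exact pow_eq_zero_iff two_ne_zero |>.mp h3
      subst hx0; simp
    · have hpos : 0 < x ⬝ᵥ x := lt_of_le_of_ne (by rw [hdot]; positivity) (Ne.symm hx)
      set c := x ⬝ᵥ x with hc
      set a : ℝ := (Real.sqrt c)⁻¹ with ha
      have ha2 : a ^ 2 = c⁻¹ := by rw [ha, inv_pow, Real.sq_sqrt hpos.le]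
      have hu : (a • x) ∈ S := by
        show ∑ i, (a • x) i ^ 2 = 1
        simp only [Pi.smul_apply, smul_eq_mul, mul_pow]
        rw [← Finset.mul_sum, ha2, ← hdot, ← hc, inv_mul_cancel₀ hx]
      have h2 := hfle s (a • x) hu
      rw [mulVec_smul, smul_dotProduct, dotProduct_smul, smul_eq_mul, smul_eq_mul] at h2
      have h3 : c⁻¹ * ((A s) *ᵥ x ⬝ᵥ x) ≤ lam s := by
        have h4 : a * (a * ((A s) *ᵥ x ⬝ᵥ x)) = c⁻¹ * ((A s) *ᵥ x ⬝ᵥ x) := by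
          rw [← ha2]; ring
        rw [h4] at h2; exact h2
      calc (A s) *ᵥ x ⬝ᵥ x = c * (c⁻¹ * ((A s) *ᵥ x ⬝ᵥ x)) := by field_simp
        _ ≤ c * lam s := mul_le_mul_of_nonneg_left h3 hpos.le
        _ = lam s * c := mul_comm _ _
  -- maximizer on the sphere
  obtain ⟨v, hvS, hvmax⟩ := hScp.exists_isMaxOn hSne (hcont (A t)).continuousOn
  have hvv : v ⬝ᵥ v = 1 := by rw [hdot]; exact hvS
  have hlamt : lam t = (A t) *ᵥ v ⬝ᵥ v := by
    rw [hlam t, hset t]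
    refine IsGreatest.csSup_eq ⟨⟨v, hvS, rfl⟩, ?_⟩
    rintro r ⟨u, huS, rfl⟩
    exact hvmax huS
  -- v is an eigenvector with eigenvalue lam t
  have hw : ∀ w : Fin n → ℝ, (A t *ᵥ v) ⬝ᵥ w = lam t * (v ⬝ᵥ w) := by
    intro w
    have hsym := riccati_symm_dot (hAsymm t) v w
    have key : ∀ s : ℝ, 2 * s * ((A t *ᵥ v) ⬝ᵥ w - lam t * (v ⬝ᵥ w))
        ≤ s ^ 2 * (lam t * (w ⬝ᵥ w) - (A t *ᵥ w) ⬝ᵥ w) := by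
      intro s
      have h1 := hle t (v + s • w)
      have hexp1 : A t *ᵥ (v + s • w) ⬝ᵥ (v + s • w)
          = (A t *ᵥ v ⬝ᵥ v) + s * (A t *ᵥ v ⬝ᵥ w) + s * (A t *ᵥ w ⬝ᵥ v)
            + s ^ 2 * (A t *ᵥ w ⬝ᵥ w) := by
        simp [mulVec_add, mulVec_smul, add_dotProduct, dotProduct_add,
          smul_dotProduct, dotProduct_smul, smul_eq_mul]
        ring
      have hexp2 : (v + s • w) ⬝ᵥ (v + s • w)
          = (v ⬝ᵥ v) + 2 * s * (v ⬝ᵥ w) + s ^ 2 * (w ⬝ᵥ w) := by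
        simp [add_dotProduct, dotProduct_add, smul_dotProduct, dotProduct_smul,
          smul_eq_mul]
        rw [dotProduct_comm w v]
        ring
      rw [hexp1, hexp2, hvv, ← hsym, ← hlamt] at h1
      nlinarith [h1]
    have hd1 : 2 * ((A t *ᵥ v) ⬝ᵥ w - lam t * (v ⬝ᵥ w)) ≤ 0 := by
      refine riccati_aux (C := lam t * (w ⬝ᵥ w) - (A t *ᵥ w) ⬝ᵥ w) (fun s hs => ?_)
      have := key s; nlinarith
    have hd2 : -(2 * ((A t *ᵥ v) ⬝ᵥ w - lam t * (v ⬝ᵥ w))) ≤ 0 := by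
      refine riccati_aux (C := lam t * (w ⬝ᵥ w) - (A t *ᵥ w) ⬝ᵥ w) (fun s hs => ?_)
      have := key (-s); nlinarith
    linarith
  have heig : A t *ᵥ v = lam t • v := by
    funext j
    have h1 := hw (Pi.single j 1)
    simpa [dotProduct_single] using h1
  -- derivative of the quadratic form along v
  have hf : HasDerivAt (fun s => (A s) *ᵥ v ⬝ᵥ v)
      ((-(A t * A t + A t * K - K * A t + K * K - B)) *ᵥ v ⬝ᵥ v) t := by
    have h1 : ∀ M : Matrix (Fin n) (Fin n) ℝ,
        M *ᵥ v ⬝ᵥ v = ∑ i, (∑ j, M i j * v j) * v i := by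
      intro M; simp [Matrix.mulVec, dotProduct]
    have h3 : HasDerivAt (fun s => ∑ i, (∑ j, A s i j * v j) * v i)
        (∑ i, (∑ j, (-(A t * A t + A t * K - K * A t + K * K - B)) i j * v j) * v i) t :=
      HasDerivAt.fun_sum fun i _ =>
        (HasDerivAt.fun_sum fun j _ => (hderiv t i j).mul_const (v j)).mul_const (v i)
    have h4 : (fun s => (A s) *ᵥ v ⬝ᵥ v)
        = fun s => ∑ i, (∑ j, A s i j * v j) * v i := funext fun s => h1 (A s)
    rw [h4, h1]
    exact h3
  have hfs : ∀ s, (A s) *ᵥ v ⬝ᵥ v ≤ lam s := fun s => hfle s v hvS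
  have hloc : IsLocalMin (fun s => lam s - (A s) *ᵥ v ⬝ᵥ v) t := by
    refine Filter.Eventually.of_forall fun s => ?_
    have h1 := hfs s
    simp only
    linarith [hlamt.le, hlamt.ge]
  have h0 : deriv (fun s => lam s - (A s) *ᵥ v ⬝ᵥ v) t = 0 := hloc.deriv_eq_zero
  have hsb : deriv (fun s => lam s - (A s) *ᵥ v ⬝ᵥ v) t
      = deriv lam t - (-(A t * A t + A t * K - K * A t + K * K - B)) *ᵥ v ⬝ᵥ v := by
    rw [deriv_fun_sub hdiff hf.differentiableAt, hf.deriv]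
  have hder : deriv lam t = (-(A t * A t + A t * K - K * A t + K * K - B)) *ᵥ v ⬝ᵥ v := by
    linarith [h0, hsb]
  -- compute the pieces
  have p1 : (A t * A t) *ᵥ v ⬝ᵥ v = lam t ^ 2 := by
    rw [← mulVec_mulVec, heig, mulVec_smul, heig, smul_smul, smul_dotProduct,
      smul_eq_mul, hvv]
    ring
  have hKv : K *ᵥ v ⬝ᵥ v = 0 := by
    have h1 : K *ᵥ v ⬝ᵥ v = -(K *ᵥ v ⬝ᵥ v) := by
      conv_lhs => rw [dotProduct_comm, dotProduct_mulVec, ← mulVec_transpose,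
        hKskew, neg_mulVec, neg_dotProduct]
    linarith
  have p2 : (A t * K) *ᵥ v ⬝ᵥ v = 0 := by
    rw [← mulVec_mulVec, riccati_symm_dot (hAsymm t), heig, smul_dotProduct,
      smul_eq_mul, dotProduct_comm, hKv, mul_zero]
  have p3 : (K * A t) *ᵥ v ⬝ᵥ v = 0 := by
    rw [← mulVec_mulVec, heig, mulVec_smul, smul_dotProduct, smul_eq_mul, hKv,
      mul_zero]
  have hexp : (-(A t * A t + A t * K - K * A t + K * K - B)) *ᵥ v ⬝ᵥ v
      = -((A t * A t) *ᵥ v ⬝ᵥ v) - ((A t * K) *ᵥ v ⬝ᵥ v) + ((K * A t) *ᵥ v ⬝ᵥ v)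
        - ((K * K) *ᵥ v ⬝ᵥ v) + (B *ᵥ v ⬝ᵥ v) := by
    simp [neg_mulVec, add_mulVec, sub_mulVec, neg_dotProduct, add_dotProduct,
      sub_dotProduct]
    ring
  have hBK : B *ᵥ v ⬝ᵥ v - (K * K) *ᵥ v ⬝ᵥ v ≤ k ^ 2 := by
    have h1 := hB v
    rw [sub_mulVec, sub_dotProduct, hvv, mul_one] at h1
    exact h1
  rw [hder, hexp, p1, p2, p3]
  linarith
end
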